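/- Define A(p,q) = p·q/(2(p+q)) · binom(2p,p) · binom(2q,q) for integers p, q ≥ 1, and let C_n be the n-th Catalan number. Then for all p ≥ 1 and q ≥ 1, A(p+1, q) = 2·∑_{i=0}^{p-1} C_i · A(p-i, q) + q · C_{p+q}. -/

import Mathlib

open Finset

private lemma hbc (n : ℕ) : ((n:ℚ)+1) * catalan n = Nat.centralBinom n := by
  exact_mod_cast succ_mul_catalan_eq_centralBinom n

private lemma hbsucc (n : ℕ) :
    (Nat.centralBinom (n+1) : ℚ) = 4 * Nat.centralBinom n - 2 * catalan n := by
  have h1 : ((n:ℚ)+1) * Nat.centralBinom (n+1) = 2*(2*(n:ℚ)+1) * Nat.centralBinom n := by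
    exact_mod_cast Nat.succ_mul_centralBinom_succ n
  have h2 := hbc n
  have hn : ((n:ℚ)+1) ≠ 0 := by positivity
  apply mul_left_cancel₀ hn
  linear_combination h1 + 2*h2

private lemma catalan_succ_q (n : ℕ) :
    (catalan (n+1) : ℚ) = ∑ i ∈ Finset.range (n+1), (catalan i : ℚ) * catalan (n - i) := by
  rw [catalan_succ]
  push_cast [Fin.sum_univ_eq_sum_range (fun i => (catalan i : ℚ) * catalan (n - i))]
  rfl

private lemma convU (n : ℕ) :
    2 * ∑ i ∈ Finset.range (n+1), (catalan i : ℚ) * Nat.centralBinom (n - i)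
      = Nat.centralBinom (n+1) := by
  induction n with
  | zero => simp [Nat.centralBinom]
  | succ n ih =>
    rw [Finset.sum_range_succ]
    have key : ∀ i ∈ Finset.range (n+1), (catalan i : ℚ) * Nat.centralBinom (n+1-i)
        = 4 * ((catalan i:ℚ) * Nat.centralBinom (n-i)) - 2 * ((catalan i:ℚ) * catalan (n-i)) := by
      intro i hi
      have h : n + 1 - i = (n - i) + 1 := by have := Finset.mem_range.mp hi; omega
      rw [h, hbsucc]; ring
    rw [Finset.sum_congr rfl key, Finset.sum_sub_distrib, ← Finset.mul_sum, ← Finset.mul_sum,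
      ← catalan_succ_q]
    simp only [Nat.sub_self, Nat.centralBinom_zero, Nat.cast_one, mul_one]
    rw [hbsucc (n+1)]
    linear_combination 4 * ih

private lemma ptf (i m q : ℕ) (hq : 1 ≤ q) :
    (catalan i : ℚ) * Nat.centralBinom (m+1) / (((m+1 : ℕ) : ℚ) + q)
      = -2/q * ((catalan i:ℚ) * catalan m)
        + (2*(2*(q:ℚ)+1)/q) * ((catalan i:ℚ) * Nat.centralBinom m / (((m:ℕ):ℚ) + ((q+1:ℕ):ℚ))) := by
  have hq0 : (0:ℚ) < q := by exact_mod_cast hq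
  have hd1 : ((m:ℚ)+1+q) ≠ 0 := by positivity
  have hd2 : ((m:ℚ)+q+1) ≠ 0 := by positivity
  have h2 := hbc m
  have h3 := hbsucc m
  push_cast
  rw [h3, ← h2]
  field_simp
  ring

private lemma keyL2 (p : ℕ) : ∀ q : ℕ, 1 ≤ q →
    ∑ i ∈ Finset.range (p+1),
        (catalan i : ℚ) * Nat.centralBinom (p - i) / (((p - i : ℕ) : ℚ) + q)
      = Nat.centralBinom (p+1) / (2*((p:ℚ)+q+1))
        + Nat.centralBinom (p+q) / ((q:ℚ)*((p:ℚ)+q+1) * Nat.centralBinom q) := by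
  induction p with
  | zero =>
    intro q hq
    have hq0 : (0:ℚ) < q := by exact_mod_cast hq
    have hB : ((Nat.centralBinom q : ℚ)) ≠ 0 := by
      exact_mod_cast Nat.centralBinom_ne_zero q
    simp only [Finset.sum_range_one, Nat.zero_sub, Nat.centralBinom_zero, catalan_zero,
      Nat.cast_one, Nat.cast_zero, one_mul, zero_add, Nat.zero_add]
    have h1 : (Nat.centralBinom 1 : ℚ) = 2 := by norm_num [Nat.centralBinom]
    rw [h1]
    field_simp
  | succ p ih =>
    intro q hq
    have hq0 : (0:ℚ) < q := by exact_mod_cast hq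
    have hS := ih (q+1) (by omega)
    have hcast : (((q+1:ℕ)):ℚ) = (q:ℚ)+1 := by push_cast; ring
    have hpq : p + (q+1) = p + q + 1 := by omega
    rw [Finset.sum_range_succ]
    have key : ∀ i ∈ Finset.range (p+1),
        (catalan i : ℚ) * Nat.centralBinom (p+1-i) / (((p+1-i : ℕ) : ℚ) + q)
        = -2/q * ((catalan i:ℚ) * catalan (p-i))
          + (2*(2*(q:ℚ)+1)/q) *
              ((catalan i:ℚ) * Nat.centralBinom (p-i) / (((p-i:ℕ):ℚ) + ((q+1:ℕ):ℚ))) := by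
      intro i hi
      have hm : p + 1 - i = (p - i) + 1 := by have := Finset.mem_range.mp hi; omega
      rw [hm, ptf (i) (p-i) q hq]
    rw [Finset.sum_congr rfl key, Finset.sum_add_distrib, ← Finset.mul_sum, ← Finset.mul_sum,
      ← catalan_succ_q, hS]
    simp only [Nat.sub_self, Nat.centralBinom_zero, Nat.cast_one, mul_one, Nat.cast_zero,
      zero_add, hcast, hpq]
    -- final algebra
    have hr : ((q:ℚ)+1) * Nat.centralBinom (q+1) = 2*(2*(q:ℚ)+1) * Nat.centralBinom q := by
      exact_mod_cast Nat.succ_mul_centralBinom_succ q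
    have hBq : ((Nat.centralBinom q : ℚ)) ≠ 0 := by exact_mod_cast Nat.centralBinom_ne_zero q
    have hBq1 : ((Nat.centralBinom (q+1) : ℚ)) ≠ 0 := by
      exact_mod_cast Nat.centralBinom_ne_zero (q+1)
    have hq1 : ((q:ℚ)+1) ≠ 0 := by positivity
    have hBq1' : (Nat.centralBinom (q+1) : ℚ) = 2*(2*(q:ℚ)+1) * Nat.centralBinom q / ((q:ℚ)+1) := by
      rw [eq_div_iff hq1]; linarith [hr]
    have hX := hbc (p+1)
    have hB2 := hbsucc (p+1)
    have hd : ((p:ℚ)+q+2) ≠ 0 := by positivity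
    rw [show p+1+q = p+q+1 from by omega]
    rw [hB2, ← hX, hBq1']
    push_cast
    field_simp
    ring



/-- `A p q = p·q/(2(p+q)) · binom(2p,p) · binom(2q,q)`, the number of clusters of
the affine `A_{p,q}` cluster algebra up to the Dehn twist `γ`. -/
noncomputable def affineACount (p q : ℕ) : ℚ :=
  ((p : ℚ) * q / (2 * ((p : ℚ) + q))) * Nat.centralBinom p * Nat.centralBinom q

/-- The recurrence `A(p+1,q) = 2·∑_{i=0}^{p-1} Cᵢ·A(p-i,q) + q·C_{p+q}`. -/
theorem stmt_9 (p q : ℕ) (hp : 1 ≤ p) (hq : 1 ≤ q) :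
    affineACount (p + 1) q =
      2 * ∑ i ∈ Finset.range p, (catalan i : ℚ) * affineACount (p - i) q +
        (q : ℚ) * catalan (p + q) := by
  have hq0 : (0:ℚ) < q := by exact_mod_cast hq
  have hBq : ((Nat.centralBinom q : ℚ)) ≠ 0 := by exact_mod_cast Nat.centralBinom_ne_zero q
  -- rewrite each summand
  have key : ∀ i ∈ Finset.range p,
      (catalan i : ℚ) * affineACount (p - i) q
      = ((q:ℚ) * Nat.centralBinom q / 2) * ((catalan i : ℚ) * Nat.centralBinom (p-i))
        - ((q:ℚ)^2 * Nat.centralBinom q / 2) *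
            ((catalan i : ℚ) * Nat.centralBinom (p-i) / (((p-i:ℕ):ℚ) + q)) := by
    intro i hi
    have him : 1 ≤ p - i := by have := Finset.mem_range.mp hi; omega
    have hm0 : (0:ℚ) < ((p-i:ℕ):ℚ) := by exact_mod_cast him
    have hd : (((p-i:ℕ):ℚ) + q) ≠ 0 := by positivity
    unfold affineACount
    field_simp
    ring
  rw [Finset.sum_congr rfl key, Finset.sum_sub_distrib, ← Finset.mul_sum, ← Finset.mul_sum]
  -- relate the two sums to convU and keyL2
  have hU := convU p
  have hL := keyL2 p q hq
  rw [Finset.sum_range_succ] at hU hL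
  simp only [Nat.sub_self, Nat.centralBinom_zero, Nat.cast_one, mul_one, Nat.cast_zero,
    zero_add] at hU hL
  have hSU : ∑ i ∈ Finset.range p, (catalan i : ℚ) * Nat.centralBinom (p-i)
      = (Nat.centralBinom (p+1) : ℚ)/2 - catalan p := by linarith [hU]
  have hSL : ∑ i ∈ Finset.range p, (catalan i : ℚ) * Nat.centralBinom (p-i) / (((p-i:ℕ):ℚ) + q)
      = Nat.centralBinom (p+1) / (2*((p:ℚ)+q+1))
        + Nat.centralBinom (p+q) / ((q:ℚ)*((p:ℚ)+q+1) * Nat.centralBinom q)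
        - (catalan p : ℚ)/q := by
    rw [← hL]; ring
  rw [hSU, hSL]
  unfold affineACount
  have hc := hbc (p+q)
  have hd1 : ((p:ℚ)+q+1) ≠ 0 := by positivity
  have hd2 : ((p:ℚ)+1+q) ≠ 0 := by positivity
  rw [← hc]
  push_cast
  field_simp
  ring
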